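/- Let L be a reduced 1-compact compactly generated multiplicative lattice with the compact elements multiplicatively closed and Clique(Γᵐ(L)) < ∞. Then every minimal prime element p of L has the form p = x* for some x ∈ L. -/

import Mathlib

variable {α : Type*}

/-- Iterated product `a^n` in a multiplicative lattice (with `a^0 = ⊤`). -/
def mpow [CompleteLattice α] (mul : α → α → α) (a : α) : ℕ → α
  | 0 => ⊤
  | n + 1 => mul a (mpow mul a n)

/-- `mul` makes the complete lattice `α` into a multiplicative lattice. -/
def IsMulLattice [CompleteLattice α] (mul : α → α → α) : Prop :=
  (∀ a b : α, mul a b = mul b a) ∧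
  (∀ a b c : α, mul (mul a b) c = mul a (mul b c)) ∧
  (∀ (a : α) (s : Set α), mul a (sSup s) = ⨆ b ∈ s, mul a b) ∧
  (∀ a b : α, mul a b ≤ a ⊓ b) ∧
  (∀ a : α, mul a ⊤ = a)

/-- The multiplicative lattice is reduced: the only nilpotent element is `⊥`. -/
def LatReduced [CompleteLattice α] (mul : α → α → α) : Prop :=
  ∀ (a : α) (n : ℕ), mpow mul a (n + 1) = ⊥ → a = ⊥

/-- `a* = sup {x | x·a = 0}`. -/
def starAnn [CompleteLattice α] (mul : α → α → α) (a : α) : α :=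
  sSup {x : α | mul x a = ⊥}

/-- A prime element of a multiplicative lattice. -/
def IsPrimeElt [CompleteLattice α] (mul : α → α → α) (p : α) : Prop :=
  p ≠ ⊤ ∧ ∀ a b : α, mul a b ≤ p → a ≤ p ∨ b ≤ p

/-- The zero-divisor graph `Γᵐ(L)` of a multiplicative lattice. -/
def zdg [CompleteLattice α] (mul : α → α → α) : SimpleGraph α where
  Adj a b := a ≠ b ∧ a ≠ ⊥ ∧ b ≠ ⊥ ∧ mul a b = ⊥ ∧ mul b a = ⊥
  symm := ⟨fun a b h => ⟨h.1.symm, h.2.2.1, h.2.1, h.2.2.2.2, h.2.2.2.1⟩⟩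
  loopless := ⟨fun a h => h.1 rfl⟩

/-- `Clique(Γᵐ(L)) < ∞`. -/
def CliqueBounded [CompleteLattice α] (mul : α → α → α) : Prop :=
  ∃ N : ℕ, ∀ s : Finset α, (zdg mul).IsClique ↑s → s.card ≤ N


variable {β : Type*}

section Helpers

variable [CompleteLattice α] {mul : α → α → α}

lemma IsMulLattice.mul_le_left (hL : IsMulLattice mul) (a b : α) : mul a b ≤ a :=
  (hL.2.2.2.1 a b).trans inf_le_left

lemma IsMulLattice.mul_le_right (hL : IsMulLattice mul) (a b : α) : mul a b ≤ b :=
  (hL.2.2.2.1 a b).trans inf_le_right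

lemma IsMulLattice.top_mul (hL : IsMulLattice mul) (a : α) : mul ⊤ a = a := by
  rw [hL.1]; exact hL.2.2.2.2 a

lemma IsMulLattice.mul_sup (hL : IsMulLattice mul) (a b c : α) :
    mul a (b ⊔ c) = mul a b ⊔ mul a c := by
  have h := hL.2.2.1 a {b, c}
  rw [sSup_pair] at h
  rw [h, iSup_pair]

lemma IsMulLattice.mono_right (hL : IsMulLattice mul) (a : α) {b c : α} (h : b ≤ c) :
    mul a b ≤ mul a c := by
  have h2 : mul a c = mul a b ⊔ mul a c := by rw [← hL.mul_sup a b c, sup_eq_right.mpr h]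
  rw [h2]; exact le_sup_left

lemma IsMulLattice.mono (hL : IsMulLattice mul) {a b c d : α} (h1 : a ≤ c) (h2 : b ≤ d) :
    mul a b ≤ mul c d := by
  calc mul a b ≤ mul a d := hL.mono_right a h2
    _ = mul d a := hL.1 a d
    _ ≤ mul d c := hL.mono_right d h1
    _ = mul c d := hL.1 d c

lemma IsMulLattice.mul_mul_mul (hL : IsMulLattice mul) (a b c d : α) :
    mul (mul a b) (mul c d) = mul (mul a c) (mul b d) := by
  rw [hL.2.1 a b (mul c d), hL.2.1 a c (mul b d)]
  congr 1
  rw [← hL.2.1 b c d, ← hL.2.1 c b d, hL.1 b c]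

lemma IsMulLattice.mpow_succ_le (hL : IsMulLattice mul) (a : α) (n : ℕ) :
    mpow mul a (n + 1) ≤ a := hL.mul_le_left _ _

lemma IsMulLattice.mpow_add (hL : IsMulLattice mul) (a : α) (m n : ℕ) :
    mpow mul a (m + n) = mul (mpow mul a m) (mpow mul a n) := by
  induction m with
  | zero => simp [mpow, hL.top_mul]
  | succ k ih =>
      have h : k + 1 + n = (k + n) + 1 := by omega
      rw [h]
      show mul a (mpow mul a (k + n)) = mul (mul a (mpow mul a k)) (mpow mul a n)
      rw [ih, ← hL.2.1]

lemma IsMulLattice.mpow_mul (hL : IsMulLattice mul) (a b : α) (n : ℕ) :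
    mpow mul (mul a b) n = mul (mpow mul a n) (mpow mul b n) := by
  induction n with
  | zero => show ⊤ = mul ⊤ (⊤ : α); rw [hL.2.2.2.2]
  | succ k ih =>
      show mul (mul a b) (mpow mul (mul a b) k)
        = mul (mul a (mpow mul a k)) (mul b (mpow mul b k))
      rw [ih, hL.mul_mul_mul]

lemma mpow_compact (htop : IsCompactElement (⊤ : α))
    (hmc : ∀ a b : α, IsCompactElement a → IsCompactElement b →
      IsCompactElement (mul a b))
    {a : α} (ha : IsCompactElement a) (n : ℕ) :
    IsCompactElement (mpow mul a n) := by
  induction n with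
  | zero => exact htop
  | succ k ih => exact hmc _ _ ha ih

end Helpers

/-- Finite product over a list of indices. -/
def mprod (mul : α → α → α) [CompleteLattice α] (f : β → α) : List β → α
  | [] => ⊤
  | a :: l => mul (f a) (mprod mul f l)

section MProd

variable [CompleteLattice α] {mul : α → α → α}

lemma mprod_le (hL : IsMulLattice mul) (f : β → α) {l : List β} {j : β} (hj : j ∈ l) :
    mprod mul f l ≤ f j := by
  induction l with
  | nil => simp at hj
  | cons a l ih =>
      rcases List.mem_cons.mp hj with rfl | hj'
      · exact hL.mul_le_left _ _
      · exact (hL.mul_le_right _ _).trans (ih hj')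

lemma mprod_not_le_prime (hL : IsMulLattice mul) {q : α} (hq : IsPrimeElt mul q)
    (f : β → α) {l : List β} (h : ∀ j ∈ l, ¬ f j ≤ q) : ¬ mprod mul f l ≤ q := by
  induction l with
  | nil => intro hle; exact hq.1 (top_le_iff.mp hle)
  | cons a l ih =>
      intro hle
      rcases hq.2 _ _ hle with h1 | h1
      · exact h a (List.mem_cons_self) h1
      · exact ih (fun j hj => h j (List.mem_cons_of_mem a hj)) h1

lemma mprod_compact (htop : IsCompactElement (⊤ : α))
    (hmc : ∀ a b : α, IsCompactElement a → IsCompactElement b →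
      IsCompactElement (mul a b))
    (f : β → α) {l : List β} (h : ∀ j ∈ l, IsCompactElement (f j)) :
    IsCompactElement (mprod mul f l) := by
  induction l with
  | nil => exact htop
  | cons a l ih =>
      exact hmc _ _ (h a (List.mem_cons_self))
        (ih (fun j hj => h j (List.mem_cons_of_mem a hj)))

end MProd

section Zorn

variable [CompleteLattice α] {mul : α → α → α}

/-- A prime avoiding a multiplicatively closed set of nonzero compact elements. -/
lemma exists_prime_avoid (hL : IsMulLattice mul) (S : Set α) (hne : S.Nonempty)
    (hScomp : ∀ s ∈ S, IsCompactElement s)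
    (hSmul : ∀ s ∈ S, ∀ t ∈ S, mul s t ∈ S)
    (hSbot : ∀ s ∈ S, s ≠ ⊥) :
    ∃ q, IsPrimeElt mul q ∧ ∀ s ∈ S, ¬ s ≤ q := by
  have hbotT : (⊥ : α) ∈ {q : α | ∀ s ∈ S, ¬ s ≤ q} := by
    intro s hs hle; exact hSbot s hs (le_bot_iff.mp hle)
  have hchainc : ∀ c ⊆ {q : α | ∀ s ∈ S, ¬ s ≤ q}, IsChain (· ≤ ·) c → ∀ y ∈ c,
      ∃ ub ∈ {q : α | ∀ s ∈ S, ¬ s ≤ q}, ∀ z ∈ c, z ≤ ub := by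
    intro c hcT hchain y hy
    refine ⟨sSup c, ?_, fun z hz => le_sSup hz⟩
    intro s hs hle
    obtain ⟨x, hxc, hsx⟩ :=
      (CompleteLattice.isCompactElement_iff_le_of_directed_sSup_le α s).mp
        (hScomp s hs) c ⟨y, hy⟩ hchain.directedOn hle
    exact hcT hxc s hs hsx
  obtain ⟨q, -, hqT, hqmax⟩ :=
    zorn_le_nonempty₀ {q : α | ∀ s ∈ S, ¬ s ≤ q} hchainc ⊥ hbotT
  · refine ⟨q, ⟨?_, ?_⟩, hqT⟩
    · obtain ⟨s, hs⟩ := hne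
      intro h; exact hqT s hs (h ▸ le_top)
    · intro a b hab
      by_contra hcon
      push_neg at hcon
      obtain ⟨ha, hb⟩ := hcon
      have hqa : ¬ (q ⊔ a) ∈ {q : α | ∀ s ∈ S, ¬ s ≤ q} := by
        intro hmem
        exact ha (le_sup_right.trans (hqmax hmem le_sup_left))
      have hqb : ¬ (q ⊔ b) ∈ {q : α | ∀ s ∈ S, ¬ s ≤ q} := by
        intro hmem
        exact hb (le_sup_right.trans (hqmax hmem le_sup_left))
      simp only [Set.mem_setOf_eq, not_forall] at hqa hqb
      push_neg at hqa hqb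
      obtain ⟨s1, hs1S, hs1⟩ := hqa
      obtain ⟨s2, hs2S, hs2⟩ := hqb
      have h1 : mul (q ⊔ a) (q ⊔ b) ≤ q := by
        rw [hL.mul_sup (q ⊔ a) q b]
        refine sup_le (hL.mul_le_right _ _) ?_
        rw [hL.1 (q ⊔ a) b, hL.mul_sup b q a]
        refine sup_le (hL.mul_le_right _ _) ?_
        rw [hL.1 b a]; exact hab
      exact hqT _ (hSmul s1 hs1S s2 hs2S) ((hL.mono hs1 hs2).trans h1)

/-- Anything below all primes is `⊥` (reduced, compactly generated case). -/
lemma le_all_primes_eq_bot [IsCompactlyGenerated α] (hL : IsMulLattice mul)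
    (hred : LatReduced mul)
    (htop : IsCompactElement (⊤ : α))
    (hmc : ∀ a b : α, IsCompactElement a → IsCompactElement b →
      IsCompactElement (mul a b))
    (a : α) (h : ∀ q, IsPrimeElt mul q → a ≤ q) : a = ⊥ := by
  rw [← le_bot_iff, le_iff_compact_le_imp]
  intro c hc hca
  by_contra hcb
  have hSbot : ∀ n : ℕ, mpow mul c (n + 1) ≠ ⊥ := by
    intro n hn
    exact hcb (le_of_eq (hred c n hn))
  obtain ⟨q, hq, hqS⟩ := exists_prime_avoid hL (Set.range fun n : ℕ => mpow mul c (n + 1))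
    ⟨_, ⟨0, rfl⟩⟩
    (by rintro s ⟨n, rfl⟩; exact mpow_compact htop hmc hc (n + 1))
    (by
      rintro s ⟨n, rfl⟩ t ⟨m, rfl⟩
      exact ⟨n + m + 1, by
        show mpow mul c (n + m + 1 + 1) = mul (mpow mul c (n + 1)) (mpow mul c (m + 1))
        rw [show n + m + 1 + 1 = (n + 1) + (m + 1) by omega, hL.mpow_add]⟩)
    (by rintro s ⟨n, rfl⟩; exact hSbot n)
  have hc1 : ¬ c ≤ q := by
    have he : mpow mul c (0 + 1) = c := by simp [mpow, hL.2.2.2.2]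
    have := hqS (mpow mul c (0 + 1)) ⟨0, rfl⟩
    rwa [he] at this
  exact hc1 (hca.trans (h q hq))

/-- In a reduced lattice, for `c` compact below a minimal prime `p` there is `z ≰ p`
with `c·z = ⊥`. -/
lemma minimal_prime_exists_ann [IsCompactlyGenerated α] (hL : IsMulLattice mul)
    (hred : LatReduced mul)
    (htop : IsCompactElement (⊤ : α))
    (hmc : ∀ a b : α, IsCompactElement a → IsCompactElement b →
      IsCompactElement (mul a b))
    {p : α} (hp : IsPrimeElt mul p) (hpmin : ∀ q, IsPrimeElt mul q → q ≤ p → q = p)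
    {c : α} (hc : IsCompactElement c) (hcp : c ≤ p) :
    ∃ z, ¬ z ≤ p ∧ mul c z = ⊥ := by
  by_contra hcon
  push_neg at hcon
  have htopnp : ¬ (⊤ : α) ≤ p := fun h => hp.1 (top_le_iff.mp h)
  obtain ⟨q, hq, hqS⟩ := exists_prime_avoid hL
    {s | ∃ n : ℕ, ∃ d : α, IsCompactElement d ∧ ¬ d ≤ p ∧
      s = mul (mpow mul c n) d}
    ⟨⊤, 0, ⊤, htop, htopnp, by simp [mpow, hL.2.2.2.2]⟩
    (by
      rintro s ⟨n, d, hd, hdp, rfl⟩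
      exact hmc _ _ (mpow_compact htop hmc hc n) hd)
    (by
      rintro s ⟨n, d, hd, hdp, rfl⟩ t ⟨m, e, he, hep, rfl⟩
      refine ⟨n + m, mul d e, hmc _ _ hd he, ?_, ?_⟩
      · intro hde
        rcases hp.2 d e hde with h | h
        · exact hdp h
        · exact hep h
      · rw [hL.mul_mul_mul, hL.mpow_add])
    (by
      rintro s ⟨n, d, hd, hdp, rfl⟩ hbot
      match n with
      | 0 =>
          rw [show mpow mul c 0 = (⊤ : α) from rfl, hL.top_mul] at hbot
          exact hdp (hbot ▸ bot_le)
      | k + 1 =>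
          have hle : mpow mul (mul c d) (k + 1) = ⊥ := by
            rw [hL.mpow_mul]
            refine le_bot_iff.mp ?_
            calc mul (mpow mul c (k + 1)) (mpow mul d (k + 1))
                ≤ mul (mpow mul c (k + 1)) d := hL.mono_right _ (hL.mpow_succ_le d k)
              _ = ⊥ := hbot
          exact hcon d hdp (hred _ k hle))
  have hcq : ¬ c ≤ q := by
    have := hqS (mul (mpow mul c 1) ⊤) ⟨1, ⊤, htop, htopnp, rfl⟩
    simpa [mpow, hL.2.2.2.2] using this
  have hqp : q ≤ p := by
    rw [le_iff_compact_le_imp]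
    intro e he heq
    by_contra hep
    exact hqS e ⟨0, e, he, hep, by simp [mpow, hL.top_mul]⟩ heq
  exact hcq (by rw [hpmin q hq hqp]; exact hcp)

/-- Every prime lies above a minimal prime. -/
lemma exists_minimal_prime_le (hL : IsMulLattice mul) (r : α) (hr : IsPrimeElt mul r) :
    ∃ q, (IsPrimeElt mul q ∧ ∀ q', IsPrimeElt mul q' → q' ≤ q → q' = q) ∧ q ≤ r := by
  have hchainc : ∀ c ⊆ {q : αᵒᵈ | IsPrimeElt mul (OrderDual.ofDual q) ∧
        OrderDual.ofDual q ≤ r}, IsChain (· ≤ ·) c → ∀ y ∈ c,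
      ∃ ub ∈ {q : αᵒᵈ | IsPrimeElt mul (OrderDual.ofDual q) ∧ OrderDual.ofDual q ≤ r},
        ∀ z ∈ c, z ≤ ub := by
    intro c hcT hchain y hy
    have hSne : (OrderDual.ofDual '' c).Nonempty := ⟨_, ⟨y, hy, rfl⟩⟩
    have hSprime : ∀ x ∈ OrderDual.ofDual '' c, IsPrimeElt mul x ∧ x ≤ r := by
      rintro x ⟨z, hz, rfl⟩; exact hcT hz
    have hScmp : ∀ x ∈ OrderDual.ofDual '' c, ∀ x' ∈ OrderDual.ofDual '' c,
        x ≤ x' ∨ x' ≤ x := by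
      rintro x ⟨z, hz, rfl⟩ x' ⟨z', hz', rfl⟩
      rcases eq_or_ne z z' with rfl | hne
      · left; exact le_rfl
      · rcases hchain hz hz' hne with h | h
        · right; exact h
        · left; exact h
    have hprime : IsPrimeElt mul (sInf (OrderDual.ofDual '' c)) := by
      constructor
      · intro htop'
        obtain ⟨x, hx⟩ := hSne
        exact (hSprime x hx).1.1 (top_le_iff.mp (htop' ▸ sInf_le hx))
      · intro a b hab
        by_contra hcon
        push_neg at hcon
        obtain ⟨ha, hb⟩ := hcon
        rw [le_sInf_iff] at ha hb
        push_neg at ha hb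
        obtain ⟨x1, hx1, hax1⟩ := ha
        obtain ⟨x2, hx2, hbx2⟩ := hb
        rcases hScmp x1 hx1 x2 hx2 with h | h
        · rcases (hSprime x1 hx1).1.2 a b (hab.trans (sInf_le hx1)) with h' | h'
          · exact hax1 h'
          · exact hbx2 (h'.trans h)
        · rcases (hSprime x2 hx2).1.2 a b (hab.trans (sInf_le hx2)) with h' | h'
          · exact hax1 (h'.trans h)
          · exact hbx2 h'
    refine ⟨OrderDual.toDual (sInf (OrderDual.ofDual '' c)), ⟨hprime, ?_⟩, ?_⟩
    · obtain ⟨x, hx⟩ := hSne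
      exact (sInf_le hx).trans (hSprime x hx).2
    · intro z hz
      exact OrderDual.le_toDual.mpr (sInf_le ⟨z, hz, rfl⟩)
  obtain ⟨q, -, hqmem, hqmax⟩ := zorn_le_nonempty₀ (α := αᵒᵈ)
    {q : αᵒᵈ | IsPrimeElt mul (OrderDual.ofDual q) ∧ OrderDual.ofDual q ≤ r} hchainc
    (OrderDual.toDual r) ⟨hr, le_rfl⟩
  refine ⟨OrderDual.ofDual q, ⟨hqmem.1, ?_⟩, hqmem.2⟩
  intro q' hq' hle
  have h2 := hqmax (y := OrderDual.toDual q') ⟨hq', hle.trans hqmem.2⟩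
    (OrderDual.le_toDual.mpr hle)
  exact le_antisymm hle (OrderDual.toDual_le.mp h2)

end Zorn

theorem minimal_prime_is_annihilator [CompleteLattice α] [IsCompactlyGenerated α]
    (mul : α → α → α) (hL : IsMulLattice mul) (hred : LatReduced mul)
    (htop : IsCompactElement (⊤ : α))
    (hmc : ∀ a b : α, IsCompactElement a →
      IsCompactElement b → IsCompactElement (mul a b))
    (hclique : CliqueBounded mul) (p : α)
    (hp : IsPrimeElt mul p) (hpmin : ∀ q : α, IsPrimeElt mul q → q ≤ p → q = p) :
    ∃ x : α, p = starAnn mul x := by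
  classical
  obtain ⟨N, hN⟩ := hclique
  -- Step 1: any finite set of minimal primes has size at most N
  have hcard : ∀ t : Finset α,
      (∀ i ∈ t, IsPrimeElt mul i ∧ ∀ q', IsPrimeElt mul q' → q' ≤ i → q' = i) →
      t.card ≤ N := by
    intro t ht
    have hincomp : ∀ i ∈ t, ∀ j ∈ t, i ≠ j → ¬ j ≤ i := by
      intro i hi j hj hne hle
      exact hne ((ht i hi).2 j (ht j hj).1 hle).symm
    have hex1 : ∀ i j : α, ∃ cc : α, i ∈ t → j ∈ t → i ≠ j →
        IsCompactElement cc ∧ cc ≤ j ∧ ¬ cc ≤ i := by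
      intro i j
      by_cases h : i ∈ t ∧ j ∈ t ∧ i ≠ j
      · obtain ⟨hi, hj, hne⟩ := h
        have hnle := hincomp i hi j hj hne
        rw [le_iff_compact_le_imp] at hnle
        push_neg at hnle
        obtain ⟨cc, h1, h2, h3⟩ := hnle
        exact ⟨cc, fun _ _ _ => ⟨h1, h2, h3⟩⟩
      · exact ⟨⊥, fun hi hj hne => absurd ⟨hi, hj, hne⟩ h⟩
    choose cc hcc using hex1
    set x : α → α := fun i => mprod mul (cc i) (t.erase i).toList with hx
    have hxcomp : ∀ i ∈ t, IsCompactElement (x i) := by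
      intro i hi
      apply mprod_compact htop hmc
      intro j hj
      rw [Finset.mem_toList, Finset.mem_erase] at hj
      exact (hcc i j hi hj.2 (fun h => hj.1 h.symm)).1
    have hxle : ∀ i ∈ t, ∀ j ∈ t, i ≠ j → x i ≤ j := by
      intro i hi j hj hne
      have hjmem : j ∈ (t.erase i).toList := by
        rw [Finset.mem_toList, Finset.mem_erase]; exact ⟨hne.symm, hj⟩
      exact (mprod_le hL (cc i) hjmem).trans (hcc i j hi hj hne).2.1
    have hxnle : ∀ i ∈ t, ¬ x i ≤ i := by
      intro i hi
      apply mprod_not_le_prime hL (ht i hi).1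
      intro j hj
      rw [Finset.mem_toList, Finset.mem_erase] at hj
      exact (hcc i j hi hj.2 (fun h => hj.1 h.symm)).2.2
    have hex2 : ∀ i j : α, ∃ z : α, i ∈ t → j ∈ t → i ≠ j →
        ¬ z ≤ j ∧ mul (x i) z = ⊥ := by
      intro i j
      by_cases h : i ∈ t ∧ j ∈ t ∧ i ≠ j
      · obtain ⟨hi, hj, hne⟩ := h
        obtain ⟨z, hz⟩ := minimal_prime_exists_ann hL hred htop hmc (ht j hj).1
          (fun q' hq' hle => (ht j hj).2 q' hq' hle) (hxcomp i hi) (hxle i hi j hj hne)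
        exact ⟨z, fun _ _ _ => hz⟩
      · exact ⟨⊥, fun hi hj hne => absurd ⟨hi, hj, hne⟩ h⟩
    choose z hz using hex2
    set y : α → α := fun j => mul (x j) (mprod mul (fun i => z i j) (t.erase j).toList)
      with hy
    have hynle : ∀ j ∈ t, ¬ y j ≤ j := by
      intro j hj hle
      rcases (ht j hj).1.2 _ _ hle with h | h
      · exact hxnle j hj h
      · revert h
        apply mprod_not_le_prime hL (ht j hj).1
        intro i hi
        rw [Finset.mem_toList, Finset.mem_erase] at hi
        exact (hz i j hi.2 hj hi.1).1
    have hybot : ∀ j ∈ t, y j ≠ ⊥ := fun j hj h => hynle j hj (h ▸ bot_le)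
    have hymul : ∀ i ∈ t, ∀ j ∈ t, i ≠ j → mul (y i) (y j) = ⊥ := by
      intro i hi j hj hne
      have h1 : y i ≤ x i := hL.mul_le_left _ _
      have h2 : y j ≤ z i j := by
        refine (hL.mul_le_right _ _).trans (mprod_le hL _ ?_)
        rw [Finset.mem_toList, Finset.mem_erase]
        exact ⟨hne, hi⟩
      exact le_bot_iff.mp ((hL.mono h1 h2).trans_eq (hz i j hi hj hne).2)
    have hyinj : Set.InjOn y ↑t := by
      intro i hi j hj hij
      by_contra hne
      have hb : mpow mul (y i) 2 = ⊥ := by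
        show mul (y i) (mul (y i) ⊤) = ⊥
        rw [hL.2.2.2.2 (y i)]
        nth_rewrite 2 [hij]
        exact hymul i hi j hj hne
      exact hybot i hi (hred _ 1 hb)
    have hclq : (zdg mul).IsClique ↑(t.image y) := by
      rw [SimpleGraph.isClique_iff]
      intro a ha b hb hab
      simp only [Finset.coe_image, Set.mem_image, Finset.mem_coe] at ha hb
      obtain ⟨i, hi, rfl⟩ := ha
      obtain ⟨j, hj, rfl⟩ := hb
      have hne : i ≠ j := fun h => hab (by rw [h])
      exact ⟨hab, hybot i hi, hybot j hj, hymul i hi j hj hne, hymul j hj i hi hne.symm⟩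
    have := hN (t.image y) hclq
    rwa [Finset.card_image_of_injOn hyinj] at this
  -- Step 2: the set of minimal primes is finite
  have hMfin : {q : α | IsPrimeElt mul q ∧ ∀ q', IsPrimeElt mul q' → q' ≤ q → q' = q}.Finite := by
    by_contra hinf
    obtain ⟨t, hts, htc⟩ := Set.Infinite.exists_subset_card_eq hinf (N + 1)
    have := hcard t (fun i hi => hts hi)
    omega
  -- Step 3: construct the annihilator
  have hpM : p ∈ hMfin.toFinset := by
    rw [Set.Finite.mem_toFinset]; exact ⟨hp, hpmin⟩
  set F : Finset α := hMfin.toFinset.erase p with hF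
  set m : α := mprod mul id F.toList with hm
  have hmle : ∀ q ∈ F, m ≤ q := fun q hq => mprod_le hL id (Finset.mem_toList.mpr hq)
  have hmnle : ¬ m ≤ p := by
    apply mprod_not_le_prime hL hp
    intro q hq hqle
    rw [Finset.mem_toList, hF, Finset.mem_erase, Set.Finite.mem_toFinset] at hq
    exact hq.1 (hpmin q hq.2.1 hqle)
  have hbot : mul p m = ⊥ := by
    apply le_all_primes_eq_bot hL hred htop hmc
    intro r hr
    obtain ⟨q, hq, hqr⟩ := exists_minimal_prime_le hL r hr
    by_cases hqp : q = p
    · exact (hL.mul_le_left p m).trans (hqp ▸ hqr)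
    · have hqF : q ∈ F := by
        rw [hF, Finset.mem_erase, Set.Finite.mem_toFinset]; exact ⟨hqp, hq⟩
      exact ((hL.mul_le_right p m).trans (hmle q hqF)).trans hqr
  refine ⟨m, le_antisymm (le_sSup hbot) (sSup_le ?_)⟩
  intro b hb
  have hbm : mul b m ≤ p := by
    rw [show mul b m = ⊥ from hb]; exact bot_le
  rcases hp.2 b m hbm with h | h
  · exact h
  · exact absurd h hmnle
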